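/- Let 0 < b_1 < b_2 < ⋯ < b_N be a strictly ordered bid profile and C_1,…,C_N > 0. If for each i = 1,…,N the bid b_i is a minimizer over a ∈ (0,∞) of the cost a ↦ C_i·W(a;b) + a, then the first-order equilibrium conditions hold: W_i = W̃_i(b) for every i = 1,…,N. -/

import Mathlib

/-- Class expected waiting times `W_i` in the accumulating-priority M/G/1 queue
with class loads `ρ`, strictly ordered bid profile `b` and mean residual
service time `W0`, defined by Kleinrock's recursion
`W_i = (W₀/(1−ρ) − Σ_{k<i} ρ_k(1 − b_k/b_i)W_k) / (1 − Σ_{k≥i} ρ_k(1 − b_i/b_k))`. -/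
noncomputable def classW {N : ℕ} (ρ b : Fin N → ℝ) (W0 : ℝ) : Fin N → ℝ
  | i =>
    (W0 / (1 - ∑ k, ρ k)
      - ∑ k : Fin N, if h : k < i then ρ k * (1 - b k / b i) * classW ρ b W0 k else 0)
    / (1 - ∑ k : Fin N, if i ≤ k then ρ k * (1 - b i / b k) else 0)
  termination_by i => i.val
  decreasing_by exact h

/-- Expected waiting time of a tagged customer bidding `a > 0` against the
strictly ordered bid profile `b`:
`W(a;b) = (W₀/(1−ρ) − Σ_{k: b_k<a} ρ_k(1 − b_k/a)W_k) / (1 − Σ_{k: b_k≥a} ρ_k(1 − a/b_k))`. -/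
noncomputable def taggedW {N : ℕ} (ρ b : Fin N → ℝ) (W0 : ℝ) (a : ℝ) : ℝ :=
  (W0 / (1 - ∑ k, ρ k)
    - ∑ k : Fin N, if b k < a then ρ k * (1 - b k / a) * classW ρ b W0 k else 0)
  / (1 - ∑ k : Fin N, if a ≤ b k then ρ k * (1 - a / b k) else 0)

/-- The first-order-condition quantity
`W̃_i(b) = (1 − Σ_{k≥i} ρ_k(1 − b_i/b_k) − (C_i/b_i²)·Σ_{k<i} ρ_k b_k W_k) / (C_i·Σ_{k≥i} ρ_k/b_k)`. -/
noncomputable def tildeW {N : ℕ} (ρ b C : Fin N → ℝ) (W0 : ℝ) (i : Fin N) : ℝ :=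
  (1 - ∑ k : Fin N, (if i ≤ k then ρ k * (1 - b i / b k) else 0)
    - C i / (b i) ^ 2 * ∑ k : Fin N, (if k < i then ρ k * b k * classW ρ b W0 k else 0))
  / (C i * ∑ k : Fin N, (if i ≤ k then ρ k / b k else 0))

lemma classW_eq {N : ℕ} (ρ b : Fin N → ℝ) (W0 : ℝ) (i : Fin N) :
    classW ρ b W0 i =
      (W0 / (1 - ∑ k, ρ k)
        - ∑ k : Fin N, if k < i then ρ k * (1 - b k / b i) * classW ρ b W0 k else 0)
      / (1 - ∑ k : Fin N, if i ≤ k then ρ k * (1 - b i / b k) else 0) := by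
  rw [classW]
  simp only [dite_eq_ite]

lemma sum_ite_le_split {N : ℕ} (i : Fin N) (s : Fin N → ℝ) :
    (∑ k : Fin N, if k ≤ i then s k else 0)
      = (∑ k : Fin N, if k < i then s k else 0) + s i := by
  have h : ∀ k : Fin N, (if k ≤ i then s k else 0)
      = (if k < i then s k else 0) + (if k = i then s k else 0) := by
    intro k
    rcases lt_trichotomy k i with h | h | h
    · simp [h.le, h, h.ne]
    · subst h; simp
    · simp [not_le.mpr h, not_lt.mpr h.le, h.ne']
  rw [Finset.sum_congr rfl fun k _ => h k, Finset.sum_add_distrib,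
    Finset.sum_ite_eq' Finset.univ i s]
  simp

lemma sum_ite_ge_split {N : ℕ} (i : Fin N) (s : Fin N → ℝ) :
    (∑ k : Fin N, if i ≤ k then s k else 0)
      = (∑ k : Fin N, if i < k then s k else 0) + s i := by
  have h : ∀ k : Fin N, (if i ≤ k then s k else 0)
      = (if i < k then s k else 0) + (if k = i then s k else 0) := by
    intro k
    rcases lt_trichotomy i k with h | h | h
    · simp [h.le, h, h.ne']
    · subst h; simp
    · simp [not_le.mpr h, not_lt.mpr h.le, h.ne]
  rw [Finset.sum_congr rfl fun k _ => h k, Finset.sum_add_distrib,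
    Finset.sum_ite_eq' Finset.univ i s]
  simp

lemma num_term_deriv {N : ℕ} (ρ b W : Fin N → ℝ) (i : Fin N) (hbpos : ∀ k, 0 < b k)
    (P : Prop) [Decidable P] (k : Fin N) :
    HasDerivAt (fun a : ℝ => if P then ρ k * (1 - b k / a) * W k else 0)
      (if P then ρ k * b k * W k / (b i) ^ 2 else 0) (b i) := by
  by_cases hP : P
  · simp only [if_pos hP]
    have h0 : HasDerivAt (fun a : ℝ => a⁻¹) (-((b i) ^ 2)⁻¹) (b i) :=
      hasDerivAt_inv (hbpos i).ne'
    have h1 := (((h0.const_mul (b k)).const_sub 1).const_mul (ρ k)).mul_const (W k)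
    have hfun : (fun a : ℝ => ρ k * (1 - b k / a) * W k)
        = fun a : ℝ => ρ k * (1 - b k * a⁻¹) * W k := by
      funext a; rw [div_eq_mul_inv]
    rw [hfun]
    exact h1.congr_deriv (by ring)
  · simp only [if_neg hP]; exact hasDerivAt_const _ 0

lemma den_term_deriv {N : ℕ} (ρ b : Fin N → ℝ) (i : Fin N)
    (P : Prop) [Decidable P] (k : Fin N) :
    HasDerivAt (fun a : ℝ => if P then ρ k * (1 - a / b k) else 0)
      (if P then -(ρ k / b k) else 0) (b i) := by
  by_cases hP : P
  · simp only [if_pos hP]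
    have h1 := (((hasDerivAt_id (b i)).div_const (b k)).const_sub 1).const_mul (ρ k)
    exact h1.congr_deriv (by ring)
  · simp only [if_neg hP]; exact hasDerivAt_const _ 0

/-- If each class bid `b_i` of a strictly ordered positive profile minimizes the
class-`i` cost `a ↦ C_i·W(a;b) + a` over `(0,∞)`, then the first-order
equilibrium conditions `W_i = W̃_i(b)` hold for every `i`. -/
theorem equilibrium_first_order_conditions (N : ℕ) (hN : 1 ≤ N)
    (ρ b C : Fin N → ℝ) (W0 : ℝ)
    (hρ : ∀ k, 0 < ρ k) (hρsum : ∑ k, ρ k < 1) (hW0 : 0 < W0)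
    (hbpos : ∀ k, 0 < b k) (hbmono : StrictMono b)
    (hC : ∀ i, 0 < C i)
    (hmin : ∀ i : Fin N, ∀ a : ℝ, 0 < a →
      C i * taggedW ρ b W0 (b i) + b i ≤ C i * taggedW ρ b W0 a + a) :
    ∀ i : Fin N, classW ρ b W0 i = tildeW ρ b C W0 i := by
  intro i
  set W : Fin N → ℝ := classW ρ b W0 with hWdef
  set K : ℝ := W0 / (1 - ∑ k, ρ k) with hK
  have hbine : b i ≠ 0 := (hbpos i).ne'
  -- the equilibrium denominator D and its positivity
  set D : ℝ := 1 - ∑ k : Fin N, (if i ≤ k then ρ k * (1 - b i / b k) else 0) with hDdef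
  have hDpos : 0 < D := by
    have h1 : (∑ k : Fin N, (if i ≤ k then ρ k * (1 - b i / b k) else 0)) ≤ ∑ k, ρ k := by
      apply Finset.sum_le_sum
      intro k _
      by_cases h : i ≤ k
      · simp only [if_pos h]
        have h2 : 0 < b i / b k := div_pos (hbpos i) (hbpos k)
        nlinarith [(hρ k).le]
      · simp only [if_neg h]; exact (hρ k).le
    rw [hDdef]; linarith
  -- the recursion at i, rewritten
  have hNum : K - (∑ k : Fin N, if k < i then ρ k * (1 - b k / b i) * W k else 0)
      = W i * D := by
    have h := classW_eq ρ b W0 i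
    rw [← hWdef, ← hK, ← hDdef] at h
    rw [eq_div_iff hDpos.ne'] at h
    linarith [h]
  -- left and right brackets around b i
  obtain ⟨c, hcbi, hc⟩ : ∃ c : ℝ, c < b i ∧ ∀ k, k < i → b k ≤ c := by
    by_cases h : 0 < i.val
    · refine ⟨b ⟨i.val - 1, by omega⟩, hbmono ?_, fun k hk => hbmono.monotone ?_⟩
      · simp [Fin.lt_def]; omega
      · simp [Fin.le_def]; have := Fin.lt_def.mp hk; omega
    · exact ⟨0, hbpos i, fun k hk => absurd (Fin.lt_def.mp hk) (by omega)⟩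
  obtain ⟨d, hbid, hd⟩ : ∃ d : ℝ, b i < d ∧ ∀ k, i < k → d ≤ b k := by
    by_cases h : i.val + 1 < N
    · refine ⟨b ⟨i.val + 1, h⟩, hbmono ?_, fun k hk => hbmono.monotone ?_⟩
      · simp [Fin.lt_def]
      · simp [Fin.le_def]; have := Fin.lt_def.mp hk; omega
    · exact ⟨b i + 1, lt_add_one _, fun k hk =>
        absurd (Fin.lt_def.mp hk) (by have := k.isLt; omega)⟩
  -- the four local functions
  set NL : ℝ → ℝ :=
    fun a => K - ∑ k : Fin N, (if k < i then ρ k * (1 - b k / a) * W k else 0) with hNLdef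
  set DL : ℝ → ℝ :=
    fun a => 1 - ∑ k : Fin N, (if i ≤ k then ρ k * (1 - a / b k) else 0) with hDLdef
  set NR : ℝ → ℝ :=
    fun a => K - ∑ k : Fin N, (if k ≤ i then ρ k * (1 - b k / a) * W k else 0) with hNRdef
  set DR : ℝ → ℝ :=
    fun a => 1 - ∑ k : Fin N, (if i < k then ρ k * (1 - a / b k) else 0) with hDRdef
  -- derivative data
  set nL : ℝ := -∑ k : Fin N, (if k < i then ρ k * b k * W k / (b i) ^ 2 else 0) with hnLdef
  set eL : ℝ := ∑ k : Fin N, (if i ≤ k then ρ k / b k else 0) with heLdef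
  set nR : ℝ := -∑ k : Fin N, (if k ≤ i then ρ k * b k * W k / (b i) ^ 2 else 0) with hnRdef
  set eR : ℝ := ∑ k : Fin N, (if i < k then ρ k / b k else 0) with heRdef
  -- values at b i
  have hDLbi : DL (b i) = D := by rw [hDLdef, hDdef]
  have hNLbi : NL (b i) = W i * D := by rw [hNLdef]; exact hNum
  have hDRbi : DR (b i) = D := by
    rw [hDRdef, hDdef]
    have := sum_ite_ge_split i (fun k => ρ k * (1 - b i / b k))
    simp only [div_self hbine, sub_self, mul_zero, add_zero] at this
    rw [this]
  have hNRbi : NR (b i) = W i * D := by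
    have hsplit := sum_ite_le_split i (fun k => ρ k * (1 - b k / b i) * W k)
    simp only [div_self hbine, sub_self, mul_zero, zero_mul, add_zero] at hsplit
    calc NR (b i)
        = K - ∑ k : Fin N, (if k ≤ i then ρ k * (1 - b k / b i) * W k else 0) := rfl
      _ = K - ∑ k : Fin N, (if k < i then ρ k * (1 - b k / b i) * W k else 0) := by
          rw [hsplit]
      _ = W i * D := hNum
  -- derivatives of the four pieces
  have hNLd : HasDerivAt NL nL (b i) := by
    rw [hNLdef, hnLdef]
    exact (HasDerivAt.fun_sum fun k _ => num_term_deriv ρ b W i hbpos (k < i) k).const_sub K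
  have hNRd : HasDerivAt NR nR (b i) := by
    rw [hNRdef, hnRdef]
    exact (HasDerivAt.fun_sum fun k _ => num_term_deriv ρ b W i hbpos (k ≤ i) k).const_sub K
  have hnegsum : ∀ (P : Fin N → Prop) [DecidablePred P],
      -(∑ k : Fin N, (if P k then -(ρ k / b k) else 0))
        = ∑ k : Fin N, (if P k then ρ k / b k else 0) := by
    intro P _
    rw [← Finset.sum_neg_distrib]
    refine Finset.sum_congr rfl fun k _ => ?_
    split <;> simp
  have hDLd : HasDerivAt DL eL (b i) := by
    have h : HasDerivAt (fun a : ℝ => ∑ k : Fin N, (if i ≤ k then ρ k * (1 - a / b k) else 0))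
        (∑ k : Fin N, (if i ≤ k then -(ρ k / b k) else 0)) (b i) :=
      HasDerivAt.fun_sum fun k _ => den_term_deriv ρ b i (i ≤ k) k
    rw [hDLdef, heLdef, ← hnegsum (fun k => i ≤ k)]
    exact h.const_sub (1 : ℝ)
  have hDRd : HasDerivAt DR eR (b i) := by
    have h : HasDerivAt (fun a : ℝ => ∑ k : Fin N, (if i < k then ρ k * (1 - a / b k) else 0))
        (∑ k : Fin N, (if i < k then -(ρ k / b k) else 0)) (b i) :=
      HasDerivAt.fun_sum fun k _ => den_term_deriv ρ b i (i < k) k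
    rw [hDRdef, heRdef, ← hnegsum (fun k => i < k)]
    exact h.const_sub (1 : ℝ)
  -- quotient derivatives
  have hfL : HasDerivAt (fun a => NL a / DL a)
      ((nL * D - W i * D * eL) / D ^ 2) (b i) := by
    have := hNLd.div hDLd (by rw [hDLbi]; exact hDpos.ne')
    rwa [hDLbi, hNLbi] at this
  have hfR : HasDerivAt (fun a => NR a / DR a)
      ((nR * D - W i * D * eR) / D ^ 2) (b i) := by
    have := hNRd.div hDRd (by rw [hDRbi]; exact hDpos.ne')
    rwa [hDRbi, hNRbi] at this
  -- taggedW agrees with the local pieces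
  have heqL : ∀ a : ℝ, c < a → a ≤ b i → taggedW ρ b W0 a = NL a / DL a := by
    intro a h1 h2
    rw [hNLdef, hDLdef, taggedW, ← hWdef, ← hK]
    congr 1
    · congr 1
      refine Finset.sum_congr rfl fun k _ => ?_
      refine if_congr ⟨fun h => ?_, fun h => lt_of_le_of_lt (hc k h) h1⟩ rfl rfl
      by_contra hk
      exact absurd (lt_of_lt_of_le h (le_trans h2 (hbmono.monotone (not_lt.mp hk))))
        (lt_irrefl _)
    · congr 1
      refine Finset.sum_congr rfl fun k _ => ?_
      refine if_congr ⟨fun h => ?_, fun h => le_trans h2 (hbmono.monotone h)⟩ rfl rfl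
      by_contra hk
      exact absurd (lt_of_le_of_lt h (lt_of_le_of_lt (hc k (not_le.mp hk)) h1))
        (lt_irrefl _)
  have heqR : ∀ a : ℝ, b i ≤ a → a < d → taggedW ρ b W0 a = NR a / DR a := by
    intro a h1 h2
    rw [hNRdef, hDRdef, taggedW, ← hWdef, ← hK]
    congr 1
    · congr 1
      refine Finset.sum_congr rfl fun k _ => ?_
      rcases lt_trichotomy k i with hk | hk | hk
      · rw [if_pos (lt_of_lt_of_le (hbmono hk) h1), if_pos hk.le]
      · subst hk
        rcases eq_or_lt_of_le h1 with h3 | h3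
        · rw [if_neg (by rw [← h3]; exact lt_irrefl _), if_pos le_rfl, ← h3,
            div_self hbine]
          ring
        · rw [if_pos h3, if_pos le_rfl]
      · rw [if_neg (not_lt.mpr (le_of_lt (lt_of_lt_of_le h2 (hd k hk)))),
          if_neg (not_le.mpr hk)]
    · congr 1
      refine Finset.sum_congr rfl fun k _ => ?_
      rcases lt_trichotomy k i with hk | hk | hk
      · rw [if_neg (not_le.mpr (lt_of_lt_of_le (hbmono hk) h1)), if_neg (not_lt.mpr hk.le)]
      · subst hk
        rcases eq_or_lt_of_le h1 with h3 | h3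
        · rw [if_pos (le_of_eq h3.symm), if_neg (lt_irrefl _), ← h3, div_self hbine]
          ring
        · rw [if_neg (not_le.mpr h3), if_neg (lt_irrefl _)]
      · rw [if_pos (le_of_lt (lt_of_lt_of_le h2 (hd k hk))), if_pos hk]
  -- one-sided derivatives for taggedW
  have htagL : HasDerivWithinAt (taggedW ρ b W0)
      ((nL * D - W i * D * eL) / D ^ 2) (Set.Iic (b i)) (b i) := by
    refine HasDerivWithinAt.congr_of_eventuallyEq
      (hfL.hasDerivWithinAt) ?_ (heqL (b i) hcbi le_rfl)
    filter_upwards [mem_nhdsWithin_of_mem_nhds (Ioi_mem_nhds hcbi),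
      self_mem_nhdsWithin] with a ha hle
    exact heqL a ha hle
  have htagR : HasDerivWithinAt (taggedW ρ b W0)
      ((nR * D - W i * D * eR) / D ^ 2) (Set.Ici (b i)) (b i) := by
    refine HasDerivWithinAt.congr_of_eventuallyEq
      (hfR.hasDerivWithinAt) ?_ (heqR (b i) le_rfl hbid)
    filter_upwards [mem_nhdsWithin_of_mem_nhds (Iio_mem_nhds hbid),
      self_mem_nhdsWithin] with a ha hle
    exact heqR a hle ha
  -- the two one-sided derivative values coincide
  have hnReq : nR = nL - ρ i * W i / b i := by
    rw [hnRdef, hnLdef, sum_ite_le_split i (fun k => ρ k * b k * W k / (b i) ^ 2)]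
    field_simp
    ring
  have heReq : eL = eR + ρ i / b i := by
    rw [heLdef, heRdef, sum_ite_ge_split i (fun k => ρ k / b k)]
  have hdeq : (nR * D - W i * D * eR) / D ^ 2 = (nL * D - W i * D * eL) / D ^ 2 := by
    rw [hnReq, heReq]
    congr 1
    field_simp
    ring
  rw [hdeq] at htagR
  have htag : HasDerivAt (taggedW ρ b W0) ((nL * D - W i * D * eL) / D ^ 2) (b i) := by
    have h := htagL.union htagR
    rw [Set.Iic_union_Ici] at h
    exact hasDerivWithinAt_univ.mp h
  -- local minimum and FOC
  have hg : HasDerivAt (fun a => C i * taggedW ρ b W0 a + a)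
      (C i * ((nL * D - W i * D * eL) / D ^ 2) + 1) (b i) :=
    (htag.const_mul (C i)).add (hasDerivAt_id (b i))
  have hlocmin : IsLocalMin (fun a => C i * taggedW ρ b W0 a + a) (b i) := by
    filter_upwards [Ioi_mem_nhds (hbpos i)] with a ha using hmin i a ha
  have hzero : C i * ((nL * D - W i * D * eL) / D ^ 2) + 1 = 0 :=
    hlocmin.hasDerivAt_eq_zero hg
  -- positivity of eL
  have heLpos : 0 < eL := by
    rw [heLdef]
    apply Finset.sum_pos'
    · intro k _
      by_cases h : i ≤ k
      · rw [if_pos h]; exact (div_pos (hρ k) (hbpos k)).le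
      · rw [if_neg h]
    · exact ⟨i, Finset.mem_univ i, by rw [if_pos le_rfl]; exact div_pos (hρ i) (hbpos i)⟩
  -- solve the FOC for W i
  have h3 : C i * nL - C i * (W i * eL) + D = 0 := by
    have hD2 : (D : ℝ) ^ 2 ≠ 0 := pow_ne_zero 2 hDpos.ne'
    have h4 : C i * (nL * D - W i * D * eL) + D ^ 2 = 0 := by
      have h5 := hzero
      field_simp at h5
      linear_combination D * h5
    have h6 : (C i * nL - C i * (W i * eL) + D) * D = 0 := by linarith [h4, sq_nonneg D]
    rcases mul_eq_zero.mp h6 with h | h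
    · exact h
    · exact absurd h hDpos.ne'
  -- relate nL to the tildeW sum
  have hnLsum : nL = -(∑ k : Fin N, (if k < i then ρ k * b k * W k else 0)) / (b i) ^ 2 := by
    rw [hnLdef, eq_div_iff (pow_ne_zero 2 hbine), neg_mul, Finset.sum_mul, neg_inj]
    refine Finset.sum_congr rfl fun k _ => ?_
    split
    · rw [div_mul_cancel₀ _ (pow_ne_zero 2 hbine)]
    · rw [zero_mul]
  -- conclude
  rw [tildeW, ← hWdef, ← hDdef, ← heLdef]
  rw [eq_div_iff (mul_pos (hC i) heLpos).ne']
  rw [hnLsum] at h3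
  field_simp at h3 ⊢
  linarith [h3]
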